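/- arXiv:2603.14720 — 2 statements merged into one kernel-verified Lean document; each statement's English description precedes it below -/
import Mathlib

section
/- Let k ≥ 1 be an integer and let a : Fin (k+1) → ℝ. Define σ on ℂ × ℂ × ℂ × ℂˣ by σ(x, y, z, u) = ((−1)^{k+1}·conj(y)/conj(u)^{k+1}, conj(x)/conj(u)^{k+1}, −conj(z)/conj(u)², −1/conj(u)). Then: (i) σ ∘ σ is the identity; (ii) if x·y = ∏_{i=1}^{k+1}(z − a_i·u), then the four components of σ(x,y,z,u) satisfy the same equation x′·y′ = ∏_{i=1}^{k+1}(z′ − a_i·u′). -/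
open Complex

/-- The real structure of the projective model of the `A_k` twistor space on the
chart `u ≠ 0`:
`σ(x,y,z,u) = ((-1)^{k+1} conj y / conj u^{k+1}, conj x / conj u^{k+1},
 -conj z / conj u², -1 / conj u)`. -/
noncomputable def twistorRealStructure (k : ℕ) (p : ℂ × ℂ × ℂ × ℂ) :
    ℂ × ℂ × ℂ × ℂ :=
  ((-1 : ℂ) ^ (k + 1) * (starRingEnd ℂ) p.2.1 / ((starRingEnd ℂ) p.2.2.2) ^ (k + 1),
   (starRingEnd ℂ) p.1 / ((starRingEnd ℂ) p.2.2.2) ^ (k + 1),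
   -(starRingEnd ℂ) p.2.2.1 / ((starRingEnd ℂ) p.2.2.2) ^ 2,
   -1 / (starRingEnd ℂ) p.2.2.2)

/-- The map `σ` is an involution on the locus `u ≠ 0`, and it preserves the
projective model `x·y = ∏_{i=1}^{k+1}(z - a_i·u)` of the twistor space of an
ALE gravitational instanton of type `A_k`. -/
theorem stmt8 (k : ℕ) (hk : 1 ≤ k) (a : Fin (k + 1) → ℝ) :
    (∀ x y z u : ℂ, u ≠ 0 →
      twistorRealStructure k (twistorRealStructure k (x, y, z, u)) = (x, y, z, u)) ∧
    (∀ x y z u : ℂ, u ≠ 0 →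
      x * y = ∏ i, (z - (a i : ℂ) * u) →
      (twistorRealStructure k (x, y, z, u)).1 *
          (twistorRealStructure k (x, y, z, u)).2.1 =
        ∏ i, ((twistorRealStructure k (x, y, z, u)).2.2.1 -
          (a i : ℂ) * (twistorRealStructure k (x, y, z, u)).2.2.2)) := by
  constructor
  · intro x y z u hu
    have hcu : (starRingEnd ℂ) u ≠ 0 := by simpa using hu
    have hm : ((-1 : ℂ))^(k+1) * ((-1 : ℂ))^(k+1) = 1 := by
      rw [← mul_pow]; norm_num
    simp only [twistorRealStructure, map_div₀, map_mul, map_pow, map_neg, map_one,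
      Complex.conj_conj, Prod.mk.injEq]
    refine ⟨?_, ?_, ?_, ?_⟩
    · field_simp
      rw [neg_pow (1 / u), div_pow, one_pow, mul_div_mul_left _ _ (pow_ne_zero _ (by norm_num : (-1:ℂ) ≠ 0)), div_div_eq_mul_div, div_one]
    · field_simp
      rw [neg_pow (1 / u), div_pow, one_pow, mul_div_mul_left _ _ (pow_ne_zero _ (by norm_num : (-1:ℂ) ≠ 0)), div_div_eq_mul_div, div_one]
    · field_simp
    · field_simp
  · intro x y z u hu h
    have hcu : (starRingEnd ℂ) u ≠ 0 := by simpa using hu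
    simp only [twistorRealStructure]
    have hfac : ∀ i : Fin (k+1),
        -(starRingEnd ℂ) z / ((starRingEnd ℂ) u) ^ 2 -
          (a i : ℂ) * (-1 / (starRingEnd ℂ) u)
        = -((starRingEnd ℂ) (z - (a i : ℂ) * u)) / ((starRingEnd ℂ) u) ^ 2 := by
      intro i
      have : (starRingEnd ℂ) ((a i : ℂ)) = (a i : ℂ) := Complex.conj_ofReal _
      field_simp [map_sub, map_mul, this]
      simp only [map_add, map_neg, map_mul, map_sub, this]
      ring
    calc (-1 : ℂ) ^ (k + 1) * (starRingEnd ℂ) y / ((starRingEnd ℂ) u) ^ (k + 1) *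
          ((starRingEnd ℂ) x / ((starRingEnd ℂ) u) ^ (k + 1))
        = (-1 : ℂ) ^ (k + 1) * (starRingEnd ℂ) (x * y) / ((starRingEnd ℂ) u ^ 2) ^ (k + 1) := by
          rw [map_mul]; field_simp; ring
      _ = ∏ i : Fin (k+1), (-((starRingEnd ℂ) (z - (a i : ℂ) * u)) / ((starRingEnd ℂ) u) ^ 2) := by
          rw [h, map_prod, Finset.prod_div_distrib]
          have h1 : ∏ i : Fin (k+1), -((starRingEnd ℂ) (z - (a i : ℂ) * u))
              = (-1 : ℂ)^(k+1) * ∏ i : Fin (k+1), (starRingEnd ℂ) (z - (a i : ℂ) * u) := by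
            calc ∏ i : Fin (k+1), -((starRingEnd ℂ) (z - (a i : ℂ) * u))
                = ∏ i : Fin (k+1), ((-1 : ℂ) * (starRingEnd ℂ) (z - (a i : ℂ) * u)) := by
                  simp [neg_one_mul]
              _ = (∏ _i : Fin (k+1), (-1 : ℂ)) *
                    ∏ i : Fin (k+1), (starRingEnd ℂ) (z - (a i : ℂ) * u) :=
                  Finset.prod_mul_distrib
              _ = _ := by simp
          rw [h1, Finset.prod_const]
          simp [Finset.card_univ]
      _ = _ := by
          exact (Finset.prod_congr rfl fun i _ => (hfac i)).symm
end

section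
/- Let n ≥ 1 be an integer, let a : Fin (2n) → ℝ, fix i with 0 ≤ i ≤ 2n, let λ ∈ ℝ with λ ≠ a_j for all j, and let c ∈ ℂ with c ≠ 0. Define x(u) = c·(∏_{j=1}^{i}(λ − a_j))·u^i, y(u) = c^{−1}·(∏_{j=i+1}^{2n}(λ − a_j))·u^{2n−i}, z(u) = λ·u. Then: (1) for every u ∈ ℂ one has x(u)·y(u) = ∏_{j=1}^{2n}(z(u) − a_j·u); (2) the curve is compatible with the real structure, i.e. for every u ≠ 0 one has x(−1/conj u) = conj(y(u))/conj(u)^{2n}, y(−1/conj u) = conj(x(u))/conj(u)^{2n}, and z(−1/conj u) = −conj(z(u))/conj(u)², if and only if |c|² = (−1)^i · (∏_{j=i+1}^{2n}(λ − a_j)) / (∏_{j=1}^{i}(λ − a_j)). -/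
open Complex

/-- Reality analysis for twistor lines through the exceptional component `C_i`:
the curve `x(u) = c·(∏_{j=1}^{i}(λ-a_j))·uⁱ`, `y(u) = c⁻¹·(∏_{j=i+1}^{2n}(λ-a_j))·u^{2n-i}`,
`z(u) = λ·u` lies on the projective model `x·y = ∏_{j=1}^{2n}(z - a_j·u)`, and it
is compatible with the real structure
`σ(x,y,z,u) = (conj y/conj u^{2n}, conj x/conj u^{2n}, -conj z/conj u², -1/conj u)`
if and only if `|c|² = (-1)^i (∏_{j=i+1}^{2n}(λ-a_j)) / (∏_{j=1}^{i}(λ-a_j))`. -/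
theorem stmt14 (n : ℕ) (hn : 1 ≤ n) (a : ℕ → ℝ) (i : ℕ) (hi : i ≤ 2 * n)
    (lam : ℝ) (hlam : ∀ j ∈ Finset.Icc 1 (2 * n), lam ≠ a j)
    (c : ℂ) (hc : c ≠ 0) (x y z : ℂ → ℂ)
    (hx : ∀ u : ℂ, x u =
      c * (∏ j ∈ Finset.Icc 1 i, ((lam : ℂ) - (a j : ℂ))) * u ^ i)
    (hy : ∀ u : ℂ, y u =
      c⁻¹ * (∏ j ∈ Finset.Icc (i + 1) (2 * n), ((lam : ℂ) - (a j : ℂ))) *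
        u ^ (2 * n - i))
    (hz : ∀ u : ℂ, z u = (lam : ℂ) * u) :
    (∀ u : ℂ, x u * y u = ∏ j ∈ Finset.Icc 1 (2 * n), (z u - (a j : ℂ) * u)) ∧
    ((∀ u : ℂ, u ≠ 0 →
        x (-1 / (starRingEnd ℂ) u) = (starRingEnd ℂ) (y u) / ((starRingEnd ℂ) u) ^ (2 * n) ∧
        y (-1 / (starRingEnd ℂ) u) = (starRingEnd ℂ) (x u) / ((starRingEnd ℂ) u) ^ (2 * n) ∧
        z (-1 / (starRingEnd ℂ) u) = -(starRingEnd ℂ) (z u) / ((starRingEnd ℂ) u) ^ 2) ↔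
      Complex.normSq c =
        (-1 : ℝ) ^ i * (∏ j ∈ Finset.Icc (i + 1) (2 * n), (lam - a j)) /
          (∏ j ∈ Finset.Icc 1 i, (lam - a j))) := by
  classical
  have hsub1 : Finset.Icc 1 i ⊆ Finset.Icc 1 (2 * n) := Finset.Icc_subset_Icc le_rfl hi
  have hsub2 : Finset.Icc (i + 1) (2 * n) ⊆ Finset.Icc 1 (2 * n) :=
    Finset.Icc_subset_Icc (by omega) le_rfl
  have hP0 : (∏ j ∈ Finset.Icc 1 i, (lam - a j)) ≠ 0 :=
    Finset.prod_ne_zero_iff.2 fun j hj => sub_ne_zero.2 (hlam j (hsub1 hj))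
  have hQ0 : (∏ j ∈ Finset.Icc (i + 1) (2 * n), (lam - a j)) ≠ 0 :=
    Finset.prod_ne_zero_iff.2 fun j hj => sub_ne_zero.2 (hlam j (hsub2 hj))
  set Pr : ℝ := ∏ j ∈ Finset.Icc 1 i, (lam - a j) with hPrdef
  set Qr : ℝ := ∏ j ∈ Finset.Icc (i + 1) (2 * n), (lam - a j) with hQrdef
  have hPc : (∏ j ∈ Finset.Icc 1 i, ((lam : ℂ) - (a j : ℂ))) = (Pr : ℂ) := by
    rw [hPrdef]; push_cast; ring
  have hQc : (∏ j ∈ Finset.Icc (i + 1) (2 * n), ((lam : ℂ) - (a j : ℂ))) = (Qr : ℂ) := by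
    rw [hQrdef]; push_cast; ring
  have hIoc : ∀ k : ℕ, Finset.Icc 1 k = Finset.Ioc 0 k := fun k => by
    exact Finset.Icc_add_one_left_eq_Ioc 0 k
  have hsplit : (∏ j ∈ Finset.Icc 1 (2 * n), ((lam : ℂ) - (a j : ℂ))) = (Pr : ℂ) * Qr := by
    rw [← hPc, ← hQc, hIoc, hIoc]
    rw [show Finset.Icc (i + 1) (2 * n) = Finset.Ioc i (2 * n) from Finset.Icc_add_one_left_eq_Ioc i (2 * n)]
    exact (Finset.prod_Ioc_consecutive _ (Nat.zero_le i) hi).symm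
  have hcc : (starRingEnd ℂ) c ≠ 0 := by
    simpa using hc
  have hsq : ((-1 : ℝ) ^ i) * ((-1 : ℝ) ^ i) = 1 := by
    rw [← pow_add]; exact Even.neg_one_pow ⟨i, rfl⟩
  constructor
  · intro u
    rw [hx, hy, hPc, hQc, hz]
    have hupow : u ^ i * u ^ (2 * n - i) = u ^ (2 * n) := by
      rw [← pow_add]; congr 1; omega
    have hrhs : (∏ j ∈ Finset.Icc 1 (2 * n), ((lam : ℂ) * u - (a j : ℂ) * u))
        = (Pr : ℂ) * Qr * u ^ (2 * n) := by
      have : ∀ j ∈ Finset.Icc 1 (2 * n),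
          (lam : ℂ) * u - (a j : ℂ) * u = ((lam : ℂ) - (a j : ℂ)) * u := fun j _ => by ring
      rw [Finset.prod_congr rfl this, Finset.prod_mul_distrib, Finset.prod_const,
        Nat.card_Icc, hsplit]
      norm_num
    rw [hrhs]
    calc c * (Pr : ℂ) * u ^ i * (c⁻¹ * (Qr : ℂ) * u ^ (2 * n - i))
        = (c * c⁻¹) * ((Pr : ℂ) * Qr) * (u ^ i * u ^ (2 * n - i)) := by ring
      _ = (Pr : ℂ) * Qr * u ^ (2 * n) := by rw [mul_inv_cancel₀ hc, hupow, one_mul]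
  · constructor
    · intro h
      have h1 := (h 1 one_ne_zero).1
      rw [hx, hy, hPc, hQc] at h1
      simp only [map_one, map_mul, map_inv₀, map_pow, Complex.conj_ofReal, one_pow,
        mul_one, div_one, neg_div] at h1
      -- h1 : c * Pr * (-1)^i = (conj c)⁻¹ * Qr  (roughly)
      have h2 : (Complex.normSq c : ℂ) * (Pr : ℂ) * (-1 : ℂ) ^ i = (Qr : ℂ) := by
        rw [← Complex.mul_conj]
        field_simp at h1
        linear_combination h1
      have h3 : Complex.normSq c * Pr * (-1 : ℝ) ^ i = Qr := by
        exact_mod_cast h2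
      rw [eq_div_iff hP0]
      linear_combination ((-1 : ℝ) ^ i) * h3 - (Complex.normSq c * Pr) * hsq
    · intro hnorm u hu
      have hcu : (starRingEnd ℂ) u ≠ 0 := by simpa using hu
      have h3 : Complex.normSq c * Pr * (-1 : ℝ) ^ i = Qr := by
        rw [hnorm]
        field_simp
        linear_combination hsq
      have hkey : c * (starRingEnd ℂ) c * (Pr : ℂ) * (-1 : ℂ) ^ i = (Qr : ℂ) := by
        rw [Complex.mul_conj]
        exact_mod_cast h3
      have hpow2n : (-1 : ℂ) ^ i * (-1 : ℂ) ^ (2 * n - i) = 1 := by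
        rw [← pow_add, show i + (2 * n - i) = 2 * n by omega]
        exact Even.neg_one_pow ⟨n, by ring⟩
      have hA : c * (Pr : ℂ) * (-1 : ℂ) ^ i = ((starRingEnd ℂ) c)⁻¹ * (Qr : ℂ) := by
        field_simp
        linear_combination hkey
      have hB : c⁻¹ * (Qr : ℂ) * (-1 : ℂ) ^ (2 * n - i) = (starRingEnd ℂ) c * (Pr : ℂ) := by
        field_simp
        linear_combination (-((-1 : ℂ) ^ (2 * n - i))) * hkey
          + (c * (starRingEnd ℂ) c * (Pr : ℂ)) * hpow2n
      have hupow : ((starRingEnd ℂ) u) ^ (2 * n - i) * ((starRingEnd ℂ) u) ^ i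
          = ((starRingEnd ℂ) u) ^ (2 * n) := by
        rw [← pow_add]; congr 1; omega
      refine ⟨?_, ?_, ?_⟩
      · rw [hx, hy, hPc, hQc]
        simp only [map_mul, map_inv₀, map_pow, Complex.conj_ofReal, neg_div]
        rw [neg_pow, div_pow, one_pow, eq_div_iff (pow_ne_zero _ hcu), ← hA, ← hupow]
        field_simp
      · rw [hx, hy, hPc, hQc]
        simp only [map_mul, map_inv₀, map_pow, Complex.conj_ofReal, neg_div]
        rw [neg_pow, div_pow, one_pow, eq_div_iff (pow_ne_zero _ hcu), ← hB, ← hupow]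
        field_simp
      · rw [hz, hz, map_mul, Complex.conj_ofReal]
        field_simp
end
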